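/- Let G be a finite connected locally connected graph and let z, a, b be three distinct vertices such that line(z,a) = line(z,b). Then z lies between a and b, i.e., d(a,b) = d(a,z) + d(z,b). -/

import Mathlib

open SimpleGraph

/-- The line defined by two vertices `a` and `b` of a graph: `{a, b}` together with all
vertices `c` lying on a shortest path through `a`, `b` and `c` (in some order). -/
def SimpleGraph.line {V : Type*} (G : SimpleGraph V) (a b : V) : Set V :=
  {a, b} ∪ {c | G.dist a b = G.dist a c + G.dist c b ∨
                G.dist a c = G.dist a b + G.dist b c ∨
                G.dist b c = G.dist b a + G.dist a c}

/-- The set of all lines of a graph. -/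
def SimpleGraph.lineSet {V : Type*} (G : SimpleGraph V) : Set (Set V) :=
  {s | ∃ a b : V, a ≠ b ∧ s = G.line a b}

/-- A graph is locally connected if the subgraph induced on each neighborhood is connected. -/
def SimpleGraph.LocallyConnected {V : Type*} (G : SimpleGraph V) : Prop :=
  ∀ v : V, (G.induce (G.neighborSet v)).Connected

lemma exists_adj_dist_aux {V : Type*} (G : SimpleGraph V) (hG : G.Connected) {x y : V} {k : ℕ}
    (hd : G.dist x y = k + 1) : ∃ c, G.Adj x c ∧ G.dist c y = k := by
  obtain ⟨p, hp⟩ := hG.exists_walk_length_eq_dist x y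
  cases p with
  | nil => rw [hd] at hp; simp at hp
  | cons hadj q =>
    rename_i c
    refine ⟨c, hadj, ?_⟩
    have h1 : G.dist c y ≤ k := by
      have := SimpleGraph.dist_le q
      rw [hd] at hp
      simp [SimpleGraph.Walk.length_cons] at hp
      omega
    have h2 : G.dist x y ≤ G.dist x c + G.dist c y := hG.dist_triangle
    have h3 : G.dist x c = 1 := SimpleGraph.dist_eq_one_iff_adj.2 hadj
    omega

lemma walk_preserve {V : Type*} (G : SimpleGraph V) {s : Set V} {P : V → Prop}
    (hstep : ∀ x y : s, (G.induce s).Adj x y → P x → P y) :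
    ∀ {x y : s} (_ : (G.induce s).Walk x y), P x → P y := by
  intro x y w
  induction w with
  | nil => exact id
  | cons hadj _ ih => exact fun hx => ih (hstep _ _ hadj hx)

lemma line_key {V : Type*} (G : SimpleGraph V)
    (hG : G.Connected) (hlc : G.LocallyConnected)
    {z a b : V} (hza : z ≠ a) (hzb : z ≠ b) (hab : a ≠ b)
    (h : G.line z a = G.line z b) :
    G.dist z b ≠ G.dist z a + G.dist a b := by
  intro hk
  have hk1 : 1 ≤ G.dist z a := hG.pos_dist_of_ne hza
  have hm1 : 1 ≤ G.dist a b := hG.pos_dist_of_ne hab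
  have haz : G.dist a z = G.dist z a := SimpleGraph.dist_comm
  have hbz : G.dist b z = G.dist z b := SimpleGraph.dist_comm
  have killA : ∀ c, c ∈ G.line z b → G.dist z c ≠ 0 → c ≠ a →
      G.dist z a = G.dist z c + G.dist c a ∨ G.dist z c = G.dist z a + G.dist a c ∨
      G.dist a c = G.dist a z + G.dist z c := by
    intro c h1 hz0 hca
    rw [← h] at h1
    simp only [SimpleGraph.line, Set.mem_union, Set.mem_insert_iff, Set.mem_singleton_iff,
      Set.mem_setOf_eq] at h1
    rcases h1 with (rfl | rfl) | h1
    · exact absurd SimpleGraph.dist_self hz0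
    · exact absurd rfl hca
    · exact h1
  have killB : ∀ c, c ∈ G.line z a → G.dist z c ≠ 0 → G.dist c b ≠ 0 →
      G.dist z b = G.dist z c + G.dist c b ∨ G.dist z c = G.dist z b + G.dist b c ∨
      G.dist b c = G.dist b z + G.dist z c := by
    intro c h1 hz0 hb0
    rw [h] at h1
    simp only [SimpleGraph.line, Set.mem_union, Set.mem_insert_iff, Set.mem_singleton_iff,
      Set.mem_setOf_eq] at h1
    rcases h1 with (rfl | rfl) | h1
    · exact absurd SimpleGraph.dist_self hz0
    · exact absurd SimpleGraph.dist_self hb0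
    · exact h1
  have safe : ∀ c, G.Adj a c →
      (G.dist c b = G.dist a b + 1 ∧ G.dist z c ≤ G.dist z a) ∨
      (G.dist z c = G.dist z a + 1 ∧ G.dist c b + 1 = G.dist a b) := by
    intro c hc
    have hca : G.dist c a = 1 := SimpleGraph.dist_eq_one_iff_adj.2 hc.symm
    have hac : G.dist a c = 1 := SimpleGraph.dist_eq_one_iff_adj.2 hc
    have hbc : G.dist b c = G.dist c b := SimpleGraph.dist_comm
    have t1 : G.dist c b ≤ G.dist c a + G.dist a b := hG.dist_triangle
    have t2 : G.dist a b ≤ G.dist a c + G.dist c b := hG.dist_triangle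
    have t3 : G.dist z c ≤ G.dist z a + G.dist a c := hG.dist_triangle
    have t4 : G.dist z a ≤ G.dist z c + G.dist c a := hG.dist_triangle
    have t5 : G.dist z b ≤ G.dist z c + G.dist c b := hG.dist_triangle
    by_cases h1 : G.dist c b = G.dist a b + 1 ∧ G.dist z c ≤ G.dist z a
    · exact Or.inl h1
    by_cases h2 : G.dist z c = G.dist z a + 1 ∧ G.dist c b + 1 = G.dist a b
    · exact Or.inr h2
    exfalso
    have hcase : (G.dist z c = G.dist z a ∧ G.dist c b = G.dist a b) ∨
        (G.dist z c = G.dist z a + 1 ∧ G.dist c b = G.dist a b) ∨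
        (G.dist z c = G.dist z a + 1 ∧ G.dist c b = G.dist a b + 1) := by omega
    rcases hcase with ⟨hp, hq⟩ | ⟨hp, hq⟩ | ⟨hp, hq⟩
    · have hX : G.dist z b = G.dist z c + G.dist c b := by omega
      have hmem : c ∈ G.line z b := Set.mem_union_right _ (Or.inl hX)
      have := killA c hmem (by omega) hc.ne'
      omega
    · have hX : G.dist z c = G.dist z a + G.dist a c := by omega
      have hmem : c ∈ G.line z a := Set.mem_union_right _ (Or.inr (Or.inl hX))
      have := killB c hmem (by omega) (by omega)
      omega
    · have hX : G.dist z c = G.dist z a + G.dist a c := by omega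
      have hmem : c ∈ G.line z a := Set.mem_union_right _ (Or.inr (Or.inl hX))
      have := killB c hmem (by omega) (by omega)
      omega
  obtain ⟨u, hau, huz⟩ := exists_adj_dist_aux G hG (x := a) (y := z)
    (k := G.dist z a - 1) (by omega)
  obtain ⟨v, hav, hvb⟩ := exists_adj_dist_aux G hG (x := a) (y := b)
    (k := G.dist a b - 1) (by omega)
  have hu : u ∈ G.neighborSet a := hau
  have hv : v ∈ G.neighborSet a := hav
  obtain ⟨w⟩ := (hlc a).preconnected ⟨u, hu⟩ ⟨v, hv⟩
  have step : ∀ x y : (G.neighborSet a : Set V),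
      (G.induce (G.neighborSet a : Set V)).Adj x y →
      (fun t : V => G.dist t b = G.dist a b + 1) x → (fun t : V => G.dist t b = G.dist a b + 1) y := by
    intro x y hxy hx
    have hgxy : G.Adj (x : V) (y : V) := hxy
    have hxy1 : G.dist (y : V) (x : V) = 1 := SimpleGraph.dist_eq_one_iff_adj.2 hgxy.symm
    have t : G.dist (y : V) b ≤ G.dist (y : V) (x : V) + G.dist (x : V) b := hG.dist_triangle
    have t' : G.dist (x : V) b ≤ G.dist (x : V) (y : V) + G.dist (y : V) b := hG.dist_triangle
    have hxy2 : G.dist (x : V) (y : V) = 1 := SimpleGraph.dist_eq_one_iff_adj.2 hgxy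
    have hs := safe (y : V) y.2
    omega
  have Pu : G.dist u b = G.dist a b + 1 := by
    have t : G.dist z b ≤ G.dist z u + G.dist u b := hG.dist_triangle
    have t2 : G.dist u b ≤ G.dist u a + G.dist a b := hG.dist_triangle
    have hua : G.dist u a = 1 := SimpleGraph.dist_eq_one_iff_adj.2 hau.symm
    have hzu : G.dist z u = G.dist u z := SimpleGraph.dist_comm
    omega
  have Pv := walk_preserve G (P := fun t : V => G.dist t b = G.dist a b + 1) step w Pu
  simp only at Pv
  omega

theorem z_in_the_middle {V : Type*} [Fintype V] (G : SimpleGraph V)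
    (hG : G.Connected) (hlc : G.LocallyConnected)
    {z a b : V} (hza : z ≠ a) (hzb : z ≠ b) (hab : a ≠ b)
    (h : G.line z a = G.line z b) :
    G.dist a b = G.dist a z + G.dist z b := by
  have ha : a ∈ G.line z b := by
    rw [← h]
    exact Set.mem_union_left _ (Set.mem_insert_of_mem _ rfl)
  simp only [SimpleGraph.line, Set.mem_union, Set.mem_insert_iff, Set.mem_singleton_iff,
    Set.mem_setOf_eq] at ha
  have haz : G.dist a z = G.dist z a := SimpleGraph.dist_comm
  have hbz : G.dist b z = G.dist z b := SimpleGraph.dist_comm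
  have hba : G.dist b a = G.dist a b := SimpleGraph.dist_comm
  rcases ha with (rfl | rfl) | h1 | h2 | h3
  · exact absurd rfl hza
  · exact absurd rfl hab
  · exact absurd h1 (line_key G hG hlc hza hzb hab h)
  · exact absurd (by omega) (line_key G hG hlc hzb hza hab.symm h.symm)
  · omega
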